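/- For two binary probability distributions P = (p, 1-p) and Q = (q, 1-q) with 0 ≤ p, q ≤ 1 satisfying the ε-LDP constraints E_{e^ε}(P‖Q) = 0 and E_{e^ε}(Q‖P) = 0 (i.e. p ≤ e^ε q, 1-p ≤ e^ε(1-q), q ≤ e^ε p, 1-q ≤ e^ε(1-p)), the total variation distance |p - q| is at most e^{-ε}(e^ε - 1)²/(e^ε - e^{-ε}), and this bound is attained. -/

import Mathlib

open Real

/-- For binary distributions `(p,1-p)` and `(q,1-q)` satisfying the ε-LDP constraints,
`|p - q| ≤ e^{-ε}(e^ε-1)²/(e^ε - e^{-ε})`, and the bound is attained. -/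
theorem stmt_4 (ε : ℝ) (hε : 0 < ε) :
    (∀ p q : ℝ, 0 ≤ p → p ≤ 1 → 0 ≤ q → q ≤ 1 →
      p ≤ Real.exp ε * q → 1 - p ≤ Real.exp ε * (1 - q) →
      q ≤ Real.exp ε * p → 1 - q ≤ Real.exp ε * (1 - p) →
      |p - q| ≤ Real.exp (-ε) * (Real.exp ε - 1)^2 / (Real.exp ε - Real.exp (-ε))) ∧
    (∃ p q : ℝ, 0 ≤ p ∧ p ≤ 1 ∧ 0 ≤ q ∧ q ≤ 1 ∧
      p ≤ Real.exp ε * q ∧ 1 - p ≤ Real.exp ε * (1 - q) ∧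
      q ≤ Real.exp ε * p ∧ 1 - q ≤ Real.exp ε * (1 - p) ∧
      |p - q| = Real.exp (-ε) * (Real.exp ε - 1)^2 / (Real.exp ε - Real.exp (-ε))) := by
  set a := Real.exp ε with ha_def
  have ha1 : 1 < a := by
    have := Real.add_one_le_exp ε
    rw [ha_def]; linarith
  have ha0 : 0 < a := lt_trans one_pos ha1
  have hA : (0:ℝ) < a + 1 := by linarith
  have hinv : Real.exp (-ε) = a⁻¹ := by rw [Real.exp_neg, ha_def]
  have hbound : Real.exp (-ε) * (a - 1)^2 / (a - Real.exp (-ε)) = (a - 1) / (a + 1) := by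
    rw [hinv]
    have hi : a⁻¹ < 1 := inv_lt_one_of_one_lt₀ ha1
    rw [div_eq_div_iff (by linarith : (0:ℝ) < a - a⁻¹).ne' hA.ne']
    field_simp
    ring
  rw [hbound]
  constructor
  · intro p q hp0 hp1 hq0 hq1 h1 h2 h3 h4
    rw [abs_le]
    constructor
    · rw [neg_le, neg_sub, le_div_iff₀ hA]; nlinarith
    · rw [le_div_iff₀ hA]; nlinarith
  · refine ⟨a / (a + 1), 1 / (a + 1), by positivity, ?_, by positivity, ?_, ?_, ?_, ?_, ?_, ?_⟩
    · rw [div_le_one hA]; linarith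
    · rw [div_le_one hA]; linarith
    · rw [mul_one_div]
    · have e1 : (1:ℝ) - a / (a + 1) = 1 / (a + 1) := by field_simp; ring
      have e2 : a * ((1:ℝ) - 1 / (a + 1)) = (a * a) / (a + 1) := by field_simp; ring
      rw [e1, e2, div_le_div_iff₀ hA hA]; nlinarith
    · have e2 : a * (a / (a + 1)) = (a * a) / (a + 1) := by field_simp
      rw [e2, div_le_div_iff₀ hA hA]; nlinarith
    · have e1 : (1:ℝ) - 1 / (a + 1) = a / (a + 1) := by field_simp; ring
      have e2 : a * ((1:ℝ) - a / (a + 1)) = a / (a + 1) := by field_simp; ring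
      rw [e1, e2]
    · have e : a / (a + 1) - 1 / (a + 1) = (a - 1) / (a + 1) := by ring
      rw [e, abs_of_nonneg (div_nonneg (by linarith) (by linarith))]
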